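/- Let δ ∈ (0, 1], s ∈ (0, 1), and let g : [0, δ] → ℝ be continuous with g(0) = 0 and differentiable on (0, δ), with g'(y) < y^{s−1} for all y ∈ (0, δ). Then g(x) ≤ x^s / (2^s − 1) for all x ∈ (0, δ). -/
import Mathlib


open Set Filter Topology

/-- telescoping estimate.  Let `δ ∈ (0,1]`, `s ∈ (0,1)` and let
`g : [0,δ] → ℝ` be continuous with `g(0) = 0`, differentiable on `(0,δ)`, with
`g'(y) < y^{s−1}` for all `y ∈ (0,δ)`.  Then `g(x) ≤ x^s/(2^s − 1)` for all `x ∈ (0,δ)`. -/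
theorem telescoping_upper_bound
    (δ s : ℝ) (hδ0 : 0 < δ) (hδ1 : δ ≤ 1) (hs : s ∈ Ioo (0:ℝ) 1)
    (g : ℝ → ℝ) (hcont : ContinuousOn g (Icc 0 δ)) (hg0 : g 0 = 0)
    (hdiff : ∀ y ∈ Ioo (0:ℝ) δ, DifferentiableAt ℝ g y)
    (hderiv : ∀ y ∈ Ioo (0:ℝ) δ, deriv g y < y ^ (s - 1)) :
    ∀ x ∈ Ioo (0:ℝ) δ, g x ≤ x ^ s / (2 ^ s - 1) := by
  obtain ⟨hs0, hs1⟩ := hs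
  set c : ℝ := 2 ^ s - 1 with hc_def
  have hc : 0 < c := by
    have : (1:ℝ) < 2 ^ s := Real.one_lt_rpow_iff_of_pos (by norm_num) |>.2 (Or.inl ⟨by norm_num, hs0⟩)
    linarith
  have hcs : c ≤ s := by
    have h := rpow_one_add_le_one_add_mul_self (s := (1:ℝ)) (by norm_num) hs0.le hs1.le
    norm_num at h
    simp only [hc_def]
    linarith
  set f : ℝ → ℝ := fun x => x ^ s / c - g x with hf_def
  have hfc : ContinuousOn f (Icc 0 δ) := by
    apply ContinuousOn.sub _ hcont
    exact (Real.continuous_rpow_const hs0.le).continuousOn.div_const c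
  have hderivf : ∀ y ∈ Ioo (0:ℝ) δ, HasDerivAt f (s * y ^ (s - 1) / c - deriv g y) y := by
    intro y hy
    exact ((Real.hasDerivAt_rpow_const (Or.inl hy.1.ne')).div_const c).sub
      (hdiff y hy).hasDerivAt
  have hmono : MonotoneOn f (Icc 0 δ) := by
    apply monotoneOn_of_deriv_nonneg (convex_Icc 0 δ) hfc
    · intro y hy
      rw [interior_Icc] at hy
      exact (hderivf y hy).differentiableAt.differentiableWithinAt
    · intro y hy
      rw [interior_Icc] at hy
      rw [(hderivf y hy).deriv]
      have hyp : (0:ℝ) < y ^ (s - 1) := Real.rpow_pos_of_pos hy.1 _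
      have h1 : y ^ (s - 1) ≤ s * y ^ (s - 1) / c := by
        rw [le_div_iff₀ hc]
        calc y ^ (s - 1) * c ≤ y ^ (s - 1) * s := by nlinarith
          _ = s * y ^ (s - 1) := mul_comm _ _
      linarith [hderiv y hy]
  intro x hx
  have h := hmono (left_mem_Icc.2 hδ0.le) ⟨hx.1.le, hx.2.le⟩ hx.1.le
  simp only [hf_def, hg0, Real.zero_rpow hs0.ne', zero_div, sub_zero] at h
  linarith
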